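/- For every u ∈ [0,1) and every z ≥ 0, the function f_u(z) = (1+u)·exp(u·z) + (1-u)·exp((1+u)·z) - (1+u)·exp(z) - (1-u) is nonnegative. -/

import Mathlib

theorem stmt_1 (u z : ℝ) (hu0 : 0 ≤ u) (hu1 : u < 1) (hz : 0 ≤ z) :
    0 ≤ (1 + u) * Real.exp (u * z) + (1 - u) * Real.exp ((1 + u) * z)
        - (1 + u) * Real.exp z - (1 - u) := by
  set f : ℝ → ℝ := fun x => (1 + u) * Real.exp (u * x) + (1 - u) * Real.exp ((1 + u) * x)
      - (1 + u) * Real.exp x - (1 - u) with hf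
  have hderiv : ∀ x : ℝ, HasDerivAt f
      ((1 + u) * (u * Real.exp (u * x)) + (1 - u) * ((1 + u) * Real.exp ((1 + u) * x))
        - (1 + u) * Real.exp x) x := by
    intro x
    have h1 : HasDerivAt (fun x : ℝ => Real.exp (u * x)) (u * Real.exp (u * x)) x := by
      simpa [mul_comm] using ((hasDerivAt_id x).const_mul u).exp
    have h2 : HasDerivAt (fun x : ℝ => Real.exp ((1 + u) * x))
        ((1 + u) * Real.exp ((1 + u) * x)) x := by
      simpa [mul_comm] using ((hasDerivAt_id x).const_mul (1 + u)).exp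
    have h3 := Real.hasDerivAt_exp x
    have := (((h1.const_mul (1 + u)).add (h2.const_mul (1 - u))).sub
      (h3.const_mul (1 + u))).sub_const (1 - u)
    simpa [hf] using this
  have hmono : MonotoneOn f (Set.Ici (0 : ℝ)) := by
    apply monotoneOn_of_deriv_nonneg (convex_Ici 0)
    · exact (Continuous.continuousOn (by
        continuity))
    · intro x _
      exact (hderiv x).differentiableAt.differentiableWithinAt
    · intro x hx
      rw [(hderiv x).deriv]
      have key : Real.exp x ≤ u * Real.exp (u * x) + (1 - u) * Real.exp ((1 + u) * x) := by
        have hconv := convexOn_exp.2 (Set.mem_univ (u * x)) (Set.mem_univ ((1 + u) * x))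
          hu0 (by linarith : (0:ℝ) ≤ 1 - u) (by ring)
        have hx' : u • (u * x) + (1 - u) • ((1 + u) * x) = x := by
          simp only [smul_eq_mul]; ring
        rw [hx'] at hconv
        simpa [smul_eq_mul] using hconv
      have h1u : (0:ℝ) ≤ 1 + u := by linarith
      nlinarith [Real.exp_pos (u * x), Real.exp_pos ((1 + u) * x), Real.exp_pos x]
  have h0 : f 0 = 0 := by simp [hf]
  have := hmono (Set.self_mem_Ici) (Set.mem_Ici.2 hz) hz
  rw [h0] at this
  exact this
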